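/- Lower bound for the q-exponential: fix q ∈ (0,1), let a = q^m and b = q^ℓ be points of the q-scale with a < b, suppose q^{-1}a ≤ b and b < 1/(1−q) and q^{-1}a < 1/(1−q), and let n ∈ ℕ, n ≥ 1. Then for every point x of the q-scale with q^{-1}a ≤ x ≤ b one has e_q^x ≥ Σ_{k=0}^{n−1} (e_q^a/[k]!) (x−a)^k_q + [ (e_q^{q^{-1}a} − Σ_{k=0}^{n−1} (e_q^a/[k]!) (q^{-1}a − a)^k_q ) / (q^{-1}a − a)^n_q ] · (x−a)^n_q. -/

import Mathlib

/-- The q-bracket of a natural number: `[k] = (q^k - 1)/(q - 1)`. -/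
noncomputable def qNat (q : ℝ) (k : ℕ) : ℝ := (q ^ k - 1) / (q - 1)

/-- The q-factorial: `[0]! = 1`, `[k+1]! = [k+1] ⬝ [k]!`. -/
noncomputable def qFactorial (q : ℝ) : ℕ → ℝ
  | 0 => 1
  | k + 1 => qNat q (k + 1) * qFactorial q k

/-- The q-shifted power `(x - a)^k_q = ∏_{j=0}^{k-1} (x - q^j a)`. -/
noncomputable def qShiftedPow (q x a : ℝ) (k : ℕ) : ℝ :=
  ∏ j ∈ Finset.range k, (x - q ^ j * a)

/-- The q-exponential `e_q^x = Σ_{k=0}^∞ x^k/[k]!`. -/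
noncomputable def qExp (q x : ℝ) : ℝ := ∑' k : ℕ, x ^ k / qFactorial q k

open Finset Filter

variable {q : ℝ}

lemma qNat_succ_pos (hq0 : 0 < q) (hq1 : q < 1) (k : ℕ) : 0 < qNat q (k + 1) := by
  have h1 : q ^ (k + 1) - 1 < 0 := by
    have : q ^ (k + 1) < 1 := pow_lt_one₀ hq0.le hq1 (by omega); linarith
  have h2 : q - 1 < 0 := by linarith
  exact div_pos_of_neg_of_neg h1 h2

lemma qFactorial_pos (hq0 : 0 < q) (hq1 : q < 1) : ∀ k, 0 < qFactorial q k
  | 0 => one_pos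
  | (k + 1) => mul_pos (qNat_succ_pos hq0 hq1 k) (qFactorial_pos hq0 hq1 k)

lemma summable_qExpSeries (hq0 : 0 < q) (hq1 : q < 1) {r : ℝ} (hr0 : 0 < r)
    (hrr : r < 1 / (1 - q)) : Summable (fun k : ℕ => r ^ k / qFactorial q k) := by
  have hq1' : 0 < 1 - q := by linarith
  have hl : r * (1 - q) < 1 := by
    rw [lt_div_iff₀ hq1'] at hrr; exact hrr
  apply summable_of_ratio_test_tendsto_lt_one hl
  · exact Eventually.of_forall fun k =>
      ne_of_gt (div_pos (pow_pos hr0 k) (qFactorial_pos hq0 hq1 k))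
  · have h0 : Tendsto (fun k : ℕ => q ^ (k + 1)) atTop (nhds 0) :=
      (tendsto_pow_atTop_nhds_zero_of_lt_one hq0.le hq1).comp (tendsto_add_atTop_nat 1)
    have h2 : Tendsto (fun k : ℕ => r * (q - 1) / (q ^ (k + 1) - 1)) atTop
        (nhds (r * (q - 1) / (0 - 1))) :=
      Tendsto.div tendsto_const_nhds (h0.sub tendsto_const_nhds) (by norm_num)
    have he : (fun k : ℕ => ‖r ^ (k + 1) / qFactorial q (k + 1)‖ / ‖r ^ k / qFactorial q k‖)
        = fun k : ℕ => r * (q - 1) / (q ^ (k + 1) - 1) := by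
      funext k
      have hfk := qFactorial_pos hq0 hq1 k
      have hfk1 := qFactorial_pos hq0 hq1 (k + 1)
      have hqn := qNat_succ_pos hq0 hq1 k
      rw [Real.norm_of_nonneg (by positivity), Real.norm_of_nonneg (by positivity)]
      have hk1 : q ^ (k + 1) - 1 ≠ 0 := by
        have : q ^ (k + 1) < 1 := pow_lt_one₀ hq0.le hq1 (by omega); intro h; rw [sub_eq_zero] at h; linarith
      have hq1'' : q - 1 ≠ 0 := by intro h; rw [sub_eq_zero] at h; linarith
      show r ^ (k + 1) / (qNat q (k + 1) * qFactorial q k) / (r ^ k / qFactorial q k) = _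
      rw [qNat]
      field_simp
      ring
    rw [he]
    convert h2 using 2
    ring

lemma qShiftedPow_zero (x a : ℝ) : qShiftedPow q x a 0 = 1 := by simp [qShiftedPow]

lemma qShiftedPow_succ (x a : ℝ) (k : ℕ) :
    qShiftedPow q x a (k + 1) = qShiftedPow q x a k * (x - q ^ k * a) :=
  Finset.prod_range_succ _ _

lemma qShiftedPow_abs_le (hq0 : 0 < q) (hq1 : q < 1) {x a : ℝ} (hx : 0 ≤ x) (ha : 0 ≤ a)
    (k : ℕ) : |qShiftedPow q x a k| ≤ max x a ^ k := by
  induction k with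
  | zero => simp [qShiftedPow_zero]
  | succ k ih =>
    rw [qShiftedPow_succ, abs_mul, pow_succ]
    refine mul_le_mul ih ?_ (abs_nonneg _) (pow_nonneg (le_max_of_le_left hx) k)
    rw [abs_le]
    have h1 : q ^ k * a ≤ a := by
      have : q ^ k ≤ 1 := pow_le_one₀ hq0.le hq1.le
      nlinarith
    have h2 : 0 ≤ q ^ k * a := by positivity
    constructor
    · have := le_max_right x a; linarith
    · have := le_max_left x a; linarith

lemma summable_qTaylorSeries (hq0 : 0 < q) (hq1 : q < 1) {x a : ℝ} (hx : 0 ≤ x)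
    (hxr : x < 1 / (1 - q)) (ha : 0 ≤ a) (har : a < 1 / (1 - q)) (C : ℝ) :
    Summable (fun k : ℕ => C / qFactorial q k * qShiftedPow q x a k) := by
  set r := max (max x a) q with hr
  have hr0 : 0 < r := lt_of_lt_of_le hq0 (le_max_right _ _)
  have hq1' : 0 < 1 - q := by linarith
  have hrr : r < 1 / (1 - q) := by
    have hq' : q < 1 / (1 - q) := by
      rw [lt_div_iff₀ hq1']; nlinarith
    simp only [hr, max_lt_iff]
    exact ⟨⟨hxr, har⟩, hq'⟩
  have hs : Summable (fun k : ℕ => |C| * (r ^ k / qFactorial q k)) :=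
    (summable_qExpSeries hq0 hq1 hr0 hrr).mul_left _
  refine Summable.of_norm_bounded hs fun k => ?_
  have hfk := qFactorial_pos hq0 hq1 k
  rw [Real.norm_eq_abs, abs_mul, abs_div, abs_of_pos hfk]
  have hS : |qShiftedPow q x a k| ≤ r ^ k := by
    refine (qShiftedPow_abs_le hq0 hq1 hx ha k).trans ?_
    exact pow_le_pow_left₀ (le_trans hx (le_max_left x a)) (le_max_left _ _) k
  have heq : |C| * (r ^ k / qFactorial q k) = |C| / qFactorial q k * r ^ k := by ring
  rw [heq]
  exact mul_le_mul_of_nonneg_left hS (by positivity)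

/-- The q-Taylor series of the q-exponential centered at `a`. -/
noncomputable def qTay (q a x : ℝ) : ℝ :=
  ∑' k : ℕ, qExp q a / qFactorial q k * qShiftedPow q x a k

lemma key_ratio (hq0 : 0 < q) (hq1 : q < 1) (k : ℕ) :
    (1 - q ^ (k + 1)) / qFactorial q (k + 1) = (1 - q) / qFactorial q k := by
  have hfk := qFactorial_pos hq0 hq1 k
  have hqn := qNat_succ_pos hq0 hq1 k
  have hq1' : q - 1 ≠ 0 := by intro h; rw [sub_eq_zero] at h; linarith
  have hne : q ^ (k + 1) - 1 ≠ 0 := by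
    have : q ^ (k + 1) < 1 := pow_lt_one₀ hq0.le hq1 (by omega)
    intro h; rw [sub_eq_zero] at h; linarith
  have hF : qFactorial q k ≠ 0 := hfk.ne'
  show (1 - q ^ (k + 1)) / (qNat q (k + 1) * qFactorial q k) = _
  rw [qNat]
  field_simp
  ring

lemma qExp_step (hq0 : 0 < q) (hq1 : q < 1) {x : ℝ} (hx0 : 0 < x) (hxr : x < 1 / (1 - q)) :
    qExp q (q * x) = qExp q x * (1 - (1 - q) * x) := by
  have hqx0 : 0 < q * x := by positivity
  have hqxr : q * x < 1 / (1 - q) := lt_trans (by nlinarith) hxr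
  have hs1 : Summable (fun k : ℕ => x ^ k / qFactorial q k) :=
    summable_qExpSeries hq0 hq1 hx0 hxr
  have hs2 : Summable (fun k : ℕ => (q * x) ^ k / qFactorial q k) :=
    summable_qExpSeries hq0 hq1 hqx0 hqxr
  have hdiff : qExp q x - qExp q (q * x) = (1 - q) * x * qExp q x := by
    rw [qExp, qExp, ← Summable.tsum_sub hs1 hs2]
    rw [Summable.tsum_eq_zero_add (hs1.sub hs2)]
    have h0 : x ^ 0 / qFactorial q 0 - (q * x) ^ 0 / qFactorial q 0 = 0 := by
      norm_num
    rw [h0, zero_add]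
    have hterm : ∀ k : ℕ, x ^ (k + 1) / qFactorial q (k + 1)
        - (q * x) ^ (k + 1) / qFactorial q (k + 1)
        = (1 - q) * x * (x ^ k / qFactorial q k) := by
      intro k
      have := key_ratio hq0 hq1 k
      have h : x ^ (k + 1) / qFactorial q (k + 1) - (q * x) ^ (k + 1) / qFactorial q (k + 1)
          = x ^ (k + 1) * ((1 - q ^ (k + 1)) / qFactorial q (k + 1)) := by
        rw [mul_pow]; ring
      rw [h, this, pow_succ]; ring
    calc ∑' k : ℕ, (x ^ (k + 1) / qFactorial q (k + 1)
            - (q * x) ^ (k + 1) / qFactorial q (k + 1))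
        = ∑' k : ℕ, (1 - q) * x * (x ^ k / qFactorial q k) := by
          exact tsum_congr hterm
      _ = (1 - q) * x * qExp q x := by rw [tsum_mul_left]; rfl
  linarith [hdiff]

lemma qShiftedPow_qmul (x a : ℝ) (k : ℕ) :
    qShiftedPow q (q * x) a (k + 1) = (q * x - a) * q ^ k * qShiftedPow q x a k := by
  induction k with
  | zero => simp [qShiftedPow_zero, qShiftedPow_succ, qShiftedPow]
  | succ k ih =>
    rw [qShiftedPow_succ, ih, qShiftedPow_succ]
    ring

lemma qTay_step (hq0 : 0 < q) (hq1 : q < 1) {a x : ℝ} (ha0 : 0 < a) (har : a < 1 / (1 - q))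
    (hx0 : 0 < x) (hxr : x < 1 / (1 - q)) :
    qTay q a (q * x) = qTay q a x * (1 - (1 - q) * x) := by
  have hqx0 : 0 < q * x := by positivity
  have hqxr : q * x < 1 / (1 - q) := lt_trans (by nlinarith) hxr
  have hs1 : Summable (fun k : ℕ => qExp q a / qFactorial q k * qShiftedPow q x a k) :=
    summable_qTaylorSeries hq0 hq1 hx0.le hxr ha0.le har _
  have hs2 : Summable (fun k : ℕ => qExp q a / qFactorial q k * qShiftedPow q (q * x) a k) :=
    summable_qTaylorSeries hq0 hq1 hqx0.le hqxr ha0.le har _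
  have hdiff : qTay q a x - qTay q a (q * x) = (1 - q) * x * qTay q a x := by
    rw [qTay, qTay, ← Summable.tsum_sub hs1 hs2]
    rw [Summable.tsum_eq_zero_add (hs1.sub hs2)]
    have h0 : qExp q a / qFactorial q 0 * qShiftedPow q x a 0
        - qExp q a / qFactorial q 0 * qShiftedPow q (q * x) a 0 = 0 := by
      rw [qShiftedPow_zero, qShiftedPow_zero]; ring
    rw [h0, zero_add]
    have hterm : ∀ k : ℕ,
        qExp q a / qFactorial q (k + 1) * qShiftedPow q x a (k + 1)
        - qExp q a / qFactorial q (k + 1) * qShiftedPow q (q * x) a (k + 1)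
        = (1 - q) * x * (qExp q a / qFactorial q k * qShiftedPow q x a k) := by
      intro k
      rw [qShiftedPow_succ, qShiftedPow_qmul]
      have hdi : qShiftedPow q x a k * (x - q ^ k * a) - (q * x - a) * q ^ k * qShiftedPow q x a k
          = (1 - q ^ (k + 1)) * x * qShiftedPow q x a k := by ring
      have h2 : qExp q a / qFactorial q (k + 1) * (qShiftedPow q x a k * (x - q ^ k * a))
          - qExp q a / qFactorial q (k + 1) * ((q * x - a) * q ^ k * qShiftedPow q x a k)
          = qExp q a * ((1 - q ^ (k + 1)) / qFactorial q (k + 1)) * x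
              * qShiftedPow q x a k := by
        rw [← mul_sub, hdi]; ring
      rw [h2, key_ratio hq0 hq1 k]
      ring
    calc ∑' k : ℕ, (qExp q a / qFactorial q (k + 1) * qShiftedPow q x a (k + 1)
            - qExp q a / qFactorial q (k + 1) * qShiftedPow q (q * x) a (k + 1))
        = ∑' k : ℕ, (1 - q) * x * (qExp q a / qFactorial q k * qShiftedPow q x a k) :=
          tsum_congr hterm
      _ = (1 - q) * x * qTay q a x := by rw [tsum_mul_left]; rfl
  linarith [hdiff]

lemma qTay_self (hq0 : 0 < q) (hq1 : q < 1) (a : ℝ) : qTay q a a = qExp q a := by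
  rw [qTay, tsum_eq_single 0]
  · simp [qShiftedPow_zero, qFactorial]
  · intro k hk
    obtain ⟨j, rfl⟩ := Nat.exists_eq_succ_of_ne_zero hk
    have : qShiftedPow q a a (j + 1) = 0 := by
      apply Finset.prod_eq_zero (Finset.mem_range.2 (Nat.succ_pos j))
      simp
    rw [this, mul_zero]

lemma qTay_eq_qExp (hq0 : 0 < q) (hq1 : q < 1) (m k : ℤ) (hkm : k ≤ m)
    (hk : q ^ k < 1 / (1 - q)) : qTay q (q ^ m) (q ^ k) = qExp q (q ^ k) := by
  have hq : (q : ℝ) ≠ 0 := hq0.ne'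
  have key : ∀ j : ℕ, ∀ k : ℤ, k = m - j → q ^ k < 1 / (1 - q) →
      qTay q (q ^ m) (q ^ k) = qExp q (q ^ k) := by
    intro j
    induction j with
    | zero =>
      intro k hk0 _
      have : k = m := by omega
      rw [this]; exact qTay_self hq0 hq1 _
    | succ j ih =>
      intro k hk0 hklt
      have hx0 : (0 : ℝ) < q ^ k := zpow_pos hq0 _
      have e1 : q * q ^ k = q ^ (k + 1) := by rw [zpow_add_one₀ hq]; ring
      have hk1 : (q : ℝ) ^ (k + 1) < 1 / (1 - q) :=
        lt_of_le_of_lt (zpow_le_zpow_right_of_le_one₀ hq0 hq1.le (by omega)) hklt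
      have ih' := ih (k + 1) (by omega) hk1
      have ham : (q : ℝ) ^ m < 1 / (1 - q) :=
        lt_of_le_of_lt (zpow_le_zpow_right_of_le_one₀ hq0 hq1.le (show k ≤ m by omega)) hklt
      have h1 := qExp_step hq0 hq1 hx0 hklt
      have h2 := qTay_step hq0 hq1 (zpow_pos hq0 m) ham hx0 hklt
      rw [e1, ih'] at h2
      rw [e1] at h1
      have hd : (1 - (1 - q) * q ^ k) ≠ 0 := by
        rw [lt_div_iff₀ (by linarith)] at hklt
        nlinarith
      exact mul_right_cancel₀ hd (h2.symm.trans h1)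
  exact key (m - k).toNat k (by omega) hk

lemma qScale_factor_pos (hq0 : 0 < q) (hq1 : q < 1) {a w : ℝ} (ha0 : 0 < a) (haw : a < w)
    (j : ℕ) : 0 < w - q ^ j * a := by
  have h1 : q ^ j ≤ 1 := pow_le_one₀ hq0.le hq1.le
  nlinarith

lemma qShiftedPow_pos (hq0 : 0 < q) (hq1 : q < 1) {a w : ℝ} (ha0 : 0 < a) (haw : a < w)
    (k : ℕ) : 0 < qShiftedPow q w a k :=
  Finset.prod_pos fun j _ => qScale_factor_pos hq0 hq1 ha0 haw j

lemma qShiftedPow_add (y a : ℝ) (n i : ℕ) :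
    qShiftedPow q y a (n + i) = qShiftedPow q y a n * ∏ j ∈ range i, (y - q ^ (n + j) * a) :=
  Finset.prod_range_add _ n i

lemma one_le_qExp (hq0 : 0 < q) (hq1 : q < 1) {a : ℝ} (ha0 : 0 < a) (har : a < 1 / (1 - q)) :
    1 ≤ qExp q a := by
  have hs := summable_qExpSeries hq0 hq1 ha0 har
  have h := Summable.le_tsum hs 0 fun j _ =>
    div_nonneg (pow_nonneg ha0.le j) (qFactorial_pos hq0 hq1 j).le
  simpa [qFactorial, qExp] using h

set_option maxHeartbeats 1000000 in
theorem qExp_lower_bound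
    (q : ℝ) (hq0 : 0 < q) (hq1 : q < 1) (m l : ℤ) (a b : ℝ)
    (ha : a = q ^ m) (hb : b = q ^ l) (hab : a < b)
    (hab' : q⁻¹ * a ≤ b) (hbr : b < 1 / (1 - q)) (har : q⁻¹ * a < 1 / (1 - q))
    (n : ℕ) (hn : 1 ≤ n) :
    ∀ x : ℝ, (∃ k : ℤ, x = q ^ k) → q⁻¹ * a ≤ x → x ≤ b →
      qExp q x ≥
        (∑ k ∈ Finset.range n, qExp q a / qFactorial q k * qShiftedPow q x a k) +
        (qExp q (q⁻¹ * a) -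
            ∑ k ∈ Finset.range n,
              qExp q a / qFactorial q k * qShiftedPow q (q⁻¹ * a) a k) /
          qShiftedPow q (q⁻¹ * a) a n * qShiftedPow q x a n := by
  rintro x ⟨k, hxk⟩ hwx hxb
  set w := q⁻¹ * a with hwdef
  have hq1' : 0 < 1 - q := by linarith
  have hw : w = q ^ (m - 1) := by
    rw [hwdef, ha, zpow_sub_one₀ hq0.ne']; ring
  have hlk : l ≤ k := by
    have : (q : ℝ) ^ k ≤ q ^ l := by rw [← hxk, ← hb]; exact hxb
    exact ((zpow_le_zpow_iff_right_of_lt_one₀ hq0 hq1).1 this)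
  have hkm : k ≤ m - 1 := by
    have : (q : ℝ) ^ (m - 1) ≤ q ^ k := by rw [← hxk, ← hw]; exact hwx
    exact ((zpow_le_zpow_iff_right_of_lt_one₀ hq0 hq1).1 this)
  have hx0 : 0 < x := by rw [hxk]; exact zpow_pos hq0 _
  have hxr : x < 1 / (1 - q) := lt_of_le_of_lt hxb hbr
  have ha0 : 0 < a := by rw [ha]; exact zpow_pos hq0 _
  have hw0 : 0 < w := by rw [hw]; exact zpow_pos hq0 _
  have haw : a < w := by
    rw [ha, hw]; exact zpow_lt_zpow_right_of_lt_one₀ hq0 hq1 (by omega)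
  have hax : a < x := lt_of_lt_of_le haw hwx
  have har' : a < 1 / (1 - q) := lt_trans haw har
  have hEx : qExp q x = qTay q a x := by
    rw [hxk, ha]
    exact (qTay_eq_qExp hq0 hq1 m k (by omega) (hxk ▸ hxr)).symm
  have hEw : qExp q w = qTay q a w := by
    rw [hw, ha]
    exact (qTay_eq_qExp hq0 hq1 m (m - 1) (by omega) (hw ▸ har)).symm
  have hsx : Summable (fun j : ℕ => qExp q a / qFactorial q j * qShiftedPow q x a j) :=
    summable_qTaylorSeries hq0 hq1 hx0.le hxr ha0.le har' _
  have hsw : Summable (fun j : ℕ => qExp q a / qFactorial q j * qShiftedPow q w a j) :=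
    summable_qTaylorSeries hq0 hq1 hw0.le har ha0.le har' _
  have htx : (∑ j ∈ range n, qExp q a / qFactorial q j * qShiftedPow q x a j)
      + ∑' i : ℕ, qExp q a / qFactorial q (i + n) * qShiftedPow q x a (i + n)
      = ∑' j : ℕ, qExp q a / qFactorial q j * qShiftedPow q x a j :=
    Summable.sum_add_tsum_nat_add n hsx
  have htw : (∑ j ∈ range n, qExp q a / qFactorial q j * qShiftedPow q w a j)
      + ∑' i : ℕ, qExp q a / qFactorial q (i + n) * qShiftedPow q w a (i + n)
      = ∑' j : ℕ, qExp q a / qFactorial q j * qShiftedPow q w a j :=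
    Summable.sum_add_tsum_nat_add n hsw
  rw [ge_iff_le, hEx, hEw]
  simp only [qTay]
  rw [← htx, ← htw, add_sub_cancel_left]
  apply add_le_add_right
  -- key tail inequality
  have hSnw : 0 < qShiftedPow q w a n := qShiftedPow_pos hq0 hq1 ha0 haw n
  have hSnx : 0 < qShiftedPow q x a n := qShiftedPow_pos hq0 hq1 ha0 hax n
  have hc : ∀ j : ℕ, 0 ≤ qExp q a / qFactorial q j :=
    fun j => div_nonneg (by linarith [one_le_qExp hq0 hq1 ha0 har']) (qFactorial_pos hq0 hq1 j).le
  have hrw : (∑' i : ℕ, qExp q a / qFactorial q (i + n) * qShiftedPow q w a (i + n)) /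
        qShiftedPow q w a n * qShiftedPow q x a n
      = ∑' i : ℕ, (qExp q a / qFactorial q (i + n) * qShiftedPow q w a (i + n) *
          (qShiftedPow q x a n / qShiftedPow q w a n)) := by
    rw [tsum_mul_right]; ring
  rw [hrw]
  refine Summable.tsum_le_tsum (fun i => ?_) (((summable_nat_add_iff n).2 hsw).mul_right _)
    ((summable_nat_add_iff n).2 hsx)
  -- termwise
  have hsplitw : qShiftedPow q w a (i + n)
      = qShiftedPow q w a n * ∏ j ∈ range i, (w - q ^ (n + j) * a) := by
    rw [add_comm i n]; exact qShiftedPow_add w a n i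
  have hsplitx : qShiftedPow q x a (i + n)
      = qShiftedPow q x a n * ∏ j ∈ range i, (x - q ^ (n + j) * a) := by
    rw [add_comm i n]; exact qShiftedPow_add x a n i
  have hprod : (∏ j ∈ range i, (w - q ^ (n + j) * a)) ≤ ∏ j ∈ range i, (x - q ^ (n + j) * a) := by
    refine Finset.prod_le_prod (fun j _ => (qScale_factor_pos hq0 hq1 ha0 haw (n + j)).le)
      (fun j _ => by linarith)
  have heq : qExp q a / qFactorial q (i + n) * qShiftedPow q w a (i + n) *
      (qShiftedPow q x a n / qShiftedPow q w a n)
      = qExp q a / qFactorial q (i + n) *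
        ((∏ j ∈ range i, (w - q ^ (n + j) * a)) * qShiftedPow q x a n) := by
    rw [hsplitw]
    have hne : qShiftedPow q w a n ≠ 0 := hSnw.ne'
    calc qExp q a / qFactorial q (i + n) *
          (qShiftedPow q w a n * ∏ j ∈ range i, (w - q ^ (n + j) * a)) *
          (qShiftedPow q x a n / qShiftedPow q w a n)
        = qExp q a / qFactorial q (i + n) *
          ((∏ j ∈ range i, (w - q ^ (n + j) * a)) * qShiftedPow q x a n) *
          (qShiftedPow q w a n / qShiftedPow q w a n) := by ring
      _ = _ := by rw [div_self hne, mul_one]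
  rw [heq, hsplitx]
  refine mul_le_mul_of_nonneg_left ?_ (hc (i + n))
  calc (∏ j ∈ range i, (w - q ^ (n + j) * a)) * qShiftedPow q x a n
      ≤ (∏ j ∈ range i, (x - q ^ (n + j) * a)) * qShiftedPow q x a n :=
        mul_le_mul_of_nonneg_right hprod hSnx.le
    _ = qShiftedPow q x a n * ∏ j ∈ range i, (x - q ^ (n + j) * a) := mul_comm _ _
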